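/- Let l, k be positive integers with l dividing k(k−1), and let A be a subset of the positive integers that is piecewise syndetic in the semigroup (ℕ, ⊛). Then for all m, n ∈ ℕ there exist positive integers a₀, a₁, …, a_m such that {a₀ + i₁·a₁ + ⋯ + i_m·a_m : i₁, …, i_m ∈ {0, 1, …, n}} ⊆ A. -/
import Mathlib


/-- The symmetric operation `a ⊛ b = l·a·b + k·(a+b) + (k²−k)/l` on `ℤ`. -/
def star (l k a b : ℤ) : ℤ := l * a * b + k * (a + b) + (k ^ 2 - k) / l

/-- `A` is piecewise syndetic in the semigroup of positive integers under `⊛`: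
there is a finite set `G` of positive integers such that for every finite set `F` of
positive integers there is a positive `x` with `F ⊛ x ⊆ ⋃_{t ∈ G} t⁻¹A`. -/
def PWSyndeticStar (l k : ℤ) (A : Set ℤ) : Prop :=
  ∃ G : Finset ℤ, (∀ g ∈ G, 0 < g) ∧
    ∀ F : Finset ℤ, (∀ f ∈ F, 0 < f) →
      ∃ x : ℤ, 0 < x ∧ ∀ f ∈ F, ∃ g ∈ G, star l k g (star l k f x) ∈ A

/-- The key algebraic identity: `g ⊛ (f ⊛ x)` is affine in `f`. -/
lemma star_star_affine (l k g x f : ℤ) :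
    star l k g (star l k f x) =
      ((l * g + k) * (l * x + k)) * f +
        ((l * g + k) * (k * x + (k ^ 2 - k) / l) + k * g + (k ^ 2 - k) / l) := by
  unfold _root_.star; ring

/-- Every piecewise syndetic subset of `(ℕ, ⊛)` contains generalized arithmetic
progressions of any length and order. -/
theorem stmt4 (l k : ℤ) (hl : 0 < l) (hk : 0 < k) (hdvd : l ∣ k * (k - 1))
    (A : Set ℤ) (hA : A ⊆ {x : ℤ | 0 < x}) (hPW : PWSyndeticStar l k A) (m n : ℕ) :
    ∃ a : Fin (m + 1) → ℤ, (∀ i, 0 < a i) ∧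
      ∀ c : Fin m → ℕ, (∀ j, c j ≤ n) →
        a 0 + ∑ j : Fin m, (c j : ℤ) * a j.succ ∈ A := by
  classical
  obtain ⟨G, hGpos, hG⟩ := hPW
  set N := m * n with hN
  -- Hales–Jewett
  obtain ⟨ι, hι, hHJ⟩ :=
    Combinatorics.Line.exists_mono_in_high_dimension (Fin (N + 1)) {g // g ∈ G}
  -- the evaluation map
  set val : (ι → Fin (N + 1)) → ℤ := fun w => 1 + ∑ i, ((w i : ℕ) : ℤ) with hval
  have hvalpos : ∀ w, 0 < val w := by
    intro w
    have : (0 : ℤ) ≤ ∑ i, ((w i : ℕ) : ℤ) :=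
      Finset.sum_nonneg fun i _ => by positivity
    simp only [hval]; omega
  set F : Finset ℤ := Finset.image val Finset.univ with hF
  obtain ⟨x, hx, hsel⟩ := hG F (by
    intro f hf
    simp only [hF, Finset.mem_image] at hf
    obtain ⟨w, -, rfl⟩ := hf
    exact hvalpos w)
  have hsel' : ∀ w : ι → Fin (N + 1),
      ∃ g : {g // g ∈ G}, star l k g (star l k (val w) x) ∈ A := by
    intro w
    obtain ⟨g, hg, hgA⟩ := hsel (val w)
      (Finset.mem_image_of_mem val (Finset.mem_univ w))
    exact ⟨⟨g, hg⟩, hgA⟩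
  choose C hC using hsel'
  obtain ⟨ℓ, g, hmono⟩ := hHJ C
  have hgpos : 0 < (g : ℤ) := hGpos _ g.2
  set α : ℤ := (l * (g : ℤ) + k) * (l * x + k) with hα
  set β : ℤ := (l * (g : ℤ) + k) * (k * x + (k ^ 2 - k) / l) + k * (g : ℤ)
      + (k ^ 2 - k) / l with hβ
  have hαpos : 0 < α := by
    apply mul_pos <;> nlinarith
  -- every point of the line lands in A after the affine map
  have hline : ∀ i : Fin (N + 1), α * val (ℓ i) + β ∈ A := by
    intro i
    have := hC (ℓ i)
    rw [hmono i] at this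
    rwa [star_star_affine] at this
  -- line arithmetic: val (ℓ i) = 1 + S0 + M * i
  set s : Finset ι := Finset.univ.filter (fun j => ℓ.idxFun j = none) with hs
  set M : ℤ := (s.card : ℤ) with hM
  set S0 : ℤ := ∑ j ∈ Finset.univ \ s, (((ℓ.idxFun j).getD 0 : Fin (N+1)) : ℤ) with hS0
  have hMpos : 0 < M := by
    obtain ⟨i, hi⟩ := ℓ.proper
    have : i ∈ s := by simp [hs, hi]
    have := Finset.card_pos.mpr ⟨i, this⟩
    simp only [hM]; exact_mod_cast this
  have hS0nonneg : 0 ≤ S0 := Finset.sum_nonneg fun j _ => by positivity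
  have hvalline : ∀ i : Fin (N + 1), val (ℓ i) = 1 + S0 + M * (i : ℤ) := by
    intro i
    have hsplit : (∑ j, (((ℓ i) j : ℕ) : ℤ)) =
        (∑ j ∈ s, (((ℓ i) j : ℕ) : ℤ)) + ∑ j ∈ Finset.univ \ s, (((ℓ i) j : ℕ) : ℤ) := by
      rw [← Finset.sum_sdiff (Finset.subset_univ s), add_comm]
    have h1 : ∀ j ∈ s, (((ℓ i) j : ℕ) : ℤ) = (i : ℤ) := by
      intro j hj
      simp only [hs, Finset.mem_filter] at hj
      simp [Combinatorics.Line.coe_apply, hj.2]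
    have h2 : ∀ j ∈ Finset.univ \ s, (((ℓ i) j : ℕ) : ℤ) =
        (((ℓ.idxFun j).getD 0 : Fin (N+1)) : ℤ) := by
      intro j hj
      simp only [hs, Finset.mem_sdiff, Finset.mem_filter] at hj
      rcases h : ℓ.idxFun j with _ | a
      · exact absurd h (by tauto)
      · simp [Combinatorics.Line.coe_apply, h]
    rw [hval]
    simp only
    rw [hsplit, Finset.sum_congr rfl h1, Finset.sum_congr rfl h2,
      Finset.sum_const, nsmul_eq_mul]
    rw [hS0, hM]
    ring
  -- assemble the answer
  refine ⟨fun j => if j = 0 then α * (1 + S0) + β else α * M, ?_, ?_⟩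
  · intro i
    by_cases h : i = 0
    · simp only [h, if_pos rfl]
      have := hA (by
        have h0 := hline ⟨0, Nat.succ_pos N⟩
        rwa [hvalline] at h0)
      simpa using this
    · simp only [if_neg h]
      exact mul_pos hαpos hMpos
  · intro c hc
    have hsum : (∑ j : Fin m, c j) ≤ N := by
      calc (∑ j : Fin m, c j) ≤ ∑ _j : Fin m, n := Finset.sum_le_sum fun j _ => hc j
        _ = m * n := by simp [Finset.sum_const, mul_comm]
    set t : Fin (N + 1) := ⟨∑ j : Fin m, c j, Nat.lt_succ_of_le hsum⟩ with ht
    have key := hline t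
    rw [hvalline] at key
    have hred : (fun j => if j = 0 then α * (1 + S0) + β else α * M) (0 : Fin (m+1)) +
        ∑ j : Fin m, (c j : ℤ) *
          ((fun j => if j = 0 then α * (1 + S0) + β else α * M) j.succ) =
        α * (1 + S0) + β + ∑ j : Fin m, (c j : ℤ) * (α * M) := by
      simp [Fin.succ_ne_zero]
    rw [hred]
    have hcast : ((t : ℕ) : ℤ) = ∑ j : Fin m, ((c j : ℕ) : ℤ) := by
      rw [show (t : ℕ) = ∑ j : Fin m, c j from rfl]
      push_cast
      rfl
    have heq : α * (1 + S0) + β + ∑ j : Fin m, (c j : ℤ) * (α * M) =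
        α * (1 + S0 + M * ((t : ℕ) : ℤ)) + β := by
      rw [← Finset.sum_mul, ← hcast]; ring
    rw [heq]
    exact key
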